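/- Let G be a compact Hausdorff abelian topological group, let E be a finite subextension of Q̄_ℓ/ℚ_ℓ, let χ : G → O_E^×/μ_E be a continuous group homomorphism, and let n ≥ 1 be an integer. Then there exist a finite subextension E' of Q̄_ℓ/ℚ_ℓ containing E and a continuous group homomorphism ξ : G → O_{E'}^×/μ_{E'} such that ξ^n equals the composition of χ with the natural map O_E^×/μ_E → O_{E'}^×/μ_{E'} induced by the inclusion O_E^× ⊆ O_{E'}^×. -/

import Mathlib

/-! Setup: `K` plays the role of `Q̄_ℓ`: an algebraic closure of `ℚ_ℓ`, viewed as a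
normed field whose norm extends the `ℓ`-adic absolute value (this determines the
topology, such an extension being unique).  `mu K` is the group `μ` of roots of
unity of `K`; for a subextension `E`, `unitBall l K E` is the group `O_E^×`
(elements of `E` of absolute value one) and `muSub l K E` is `μ_E`, so that
`↥(unitBall l K E) ⧸ muSub l K E` is `O_E^×/μ_E` with its quotient topology, and
`mapQ` is the natural map `O_E^×/μ_E → O_{E'}^×/μ_{E'}` for `E ≤ E'`. -/

/-- The group `μ` of roots of unity of `K`, as a subgroup of `Kˣ`. -/
def mu (K : Type*) [Field K] : Subgroup Kˣ where
  carrier := {x | ∃ n : ℕ, 0 < n ∧ x ^ n = 1}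
  one_mem' := ⟨1, Nat.one_pos, one_pow 1⟩
  mul_mem' := by
    rintro a b ⟨m, hm, ha⟩ ⟨n, hn, hb⟩
    refine ⟨m * n, Nat.mul_pos hm hn, ?_⟩
    rw [mul_pow, pow_mul, ha, one_pow, one_mul, pow_mul', hb, one_pow]
  inv_mem' := by
    rintro a ⟨n, hn, ha⟩
    exact ⟨n, hn, by rw [inv_pow, ha, inv_one]⟩

/-- `O_E^×`, the unit group of the ring of integers `O_E = E ∩ Z̄_ℓ` of a
subextension `E`, realized as the subgroup of `Kˣ` of elements of `E` of
absolute value `1`. -/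
def unitBall (l : ℕ) [Fact l.Prime] (K : Type*) [NormedField K] [Algebra ℚ_[l] K]
    (E : IntermediateField ℚ_[l] K) : Subgroup Kˣ where
  carrier := {x | (x : K) ∈ E ∧ ‖(x : K)‖ = 1}
  one_mem' := ⟨by simpa using E.one_mem, by simp⟩
  mul_mem' := by
    rintro a b ⟨haE, ha⟩ ⟨hbE, hb⟩
    exact ⟨by simpa using E.mul_mem haE hbE, by simp [ha, hb]⟩
  inv_mem' := by
    rintro a ⟨haE, ha⟩
    exact ⟨by simpa using E.inv_mem haE, by simp [ha]⟩

/-- `μ_E`, the group of roots of unity of `E`, as a subgroup of `O_E^×`. -/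
def muSub (l : ℕ) [Fact l.Prime] (K : Type*) [NormedField K] [Algebra ℚ_[l] K]
    (E : IntermediateField ℚ_[l] K) : Subgroup ↥(unitBall l K E) :=
  (mu K).subgroupOf (unitBall l K E)

lemma unitBall_mono (l : ℕ) [Fact l.Prime] (K : Type*) [NormedField K]
    [Algebra ℚ_[l] K] {E E' : IntermediateField ℚ_[l] K} (h : E ≤ E') :
    unitBall l K E ≤ unitBall l K E' := fun _ hx => ⟨h hx.1, hx.2⟩

/-- The natural map `O_E^×/μ_E → O_{E'}^×/μ_{E'}` induced by an inclusion `E ≤ E'`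
of subextensions. -/
noncomputable def mapQ (l : ℕ) [Fact l.Prime] (K : Type*) [NormedField K]
    [Algebra ℚ_[l] K] {E E' : IntermediateField ℚ_[l] K} (h : E ≤ E') :
    (↥(unitBall l K E) ⧸ muSub l K E) →* ↥(unitBall l K E') ⧸ muSub l K E' :=
  QuotientGroup.map (muSub l K E) (muSub l K E')
    (Subgroup.inclusion (unitBall_mono l K h)) (fun _ hx => hx)

/-! ### Auxiliary ultrametric lemmas -/

theorem ultra_norm_sub_le_max {F : Type*} [SeminormedAddCommGroup F] [IsUltrametricDist F]
    (a b : F) : ‖a - b‖ ≤ max ‖a‖ ‖b‖ := by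
  rw [sub_eq_add_neg]
  simpa using IsUltrametricDist.norm_add_le_max a (-b)

open IsUltrametricDist in
theorem ultra_L0 {F : Type*} [NormedField F] [IsUltrametricDist F] {x : F} (hx : ‖x‖ ≤ 1)
    (n : ℕ) : ‖x ^ n - 1‖ ≤ ‖x - 1‖ := by
  induction n with
  | zero => simpa using norm_nonneg (x - 1)
  | succ n ih =>
    have h : x ^ (n + 1) - 1 = x ^ n * (x - 1) + (x ^ n - 1) := by ring
    rw [h]
    refine (norm_add_le_max _ _).trans (max_le ?_ ih)
    rw [norm_mul]
    exact mul_le_of_le_one_left (norm_nonneg _) (by simpa using pow_le_one₀ (norm_nonneg x) hx)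

open IsUltrametricDist in
theorem ultra_L1 {F : Type*} [NormedField F] [IsUltrametricDist F]
    (hnat : ∀ m : ℕ, ‖(m : F)‖ ≤ 1) {s : F} (hs : ‖s‖ ≤ 1) (n : ℕ) :
    ‖(1 + s) ^ n - 1 - n * s‖ ≤ ‖s‖ ^ 2 := by
  have h1s : ‖1 + s‖ ≤ 1 := by
    refine (norm_add_le_max _ _).trans (max_le (by simp) hs)
  induction n with
  | zero => simpa using sq_nonneg ‖s‖
  | succ n ih =>
    have h : (1 + s) ^ (n + 1) - 1 - (↑(n + 1) : F) * s
        = ((1 + s) ^ n - 1 - n * s) * (1 + s) + (n : F) * s ^ 2 := by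
      push_cast; ring
    rw [h]
    refine (norm_add_le_max _ _).trans (max_le ?_ ?_)
    · rw [norm_mul]
      calc ‖(1 + s) ^ n - 1 - ↑n * s‖ * ‖1 + s‖ ≤ ‖s‖ ^ 2 * 1 :=
            mul_le_mul ih h1s (norm_nonneg _) (sq_nonneg _)
        _ = ‖s‖ ^ 2 := mul_one _
    · rw [norm_mul, norm_pow]
      exact mul_le_of_le_one_left (by positivity) (hnat n)

open IsUltrametricDist in
theorem ultra_L2 {F : Type*} [NormedField F] [IsUltrametricDist F]
    (hnat : ∀ m : ℕ, ‖(m : F)‖ ≤ 1) {s s' : F} (hs : ‖s‖ ≤ 1) (hs' : ‖s'‖ ≤ 1) (n : ℕ) :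
    ‖(1 + s) ^ n - (1 + s') ^ n - n * (s - s')‖ ≤ max ‖s‖ ‖s'‖ * ‖s - s'‖ := by
  have h1s : ‖1 + s‖ ≤ 1 := (norm_add_le_max _ _).trans (max_le (by simp) hs)
  induction n with
  | zero => simpa using mul_nonneg (le_max_of_le_left (norm_nonneg s)) (norm_nonneg (s - s'))
  | succ n ih =>
    have h : (1 + s) ^ (n + 1) - (1 + s') ^ (n + 1) - (↑(n + 1) : F) * (s - s')
        = ((1 + s) ^ n - (1 + s') ^ n - n * (s - s')) * (1 + s)
          + (s - s') * ((n : F) * s + ((1 + s') ^ n - 1)) := by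
      push_cast; ring
    rw [h]
    refine (norm_add_le_max _ _).trans (max_le ?_ ?_)
    · rw [norm_mul]
      calc ‖(1 + s) ^ n - (1 + s') ^ n - ↑n * (s - s')‖ * ‖1 + s‖
          ≤ (max ‖s‖ ‖s'‖ * ‖s - s'‖) * 1 := by
            refine mul_le_mul ih h1s (norm_nonneg _) ?_
            positivity
        _ = max ‖s‖ ‖s'‖ * ‖s - s'‖ := mul_one _
    · rw [norm_mul, mul_comm]
      refine mul_le_mul_of_nonneg_right ?_ (norm_nonneg _)
      refine (norm_add_le_max _ _).trans (max_le ?_ ?_)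
      · rw [norm_mul]
        exact le_max_of_le_left (mul_le_of_le_one_left (norm_nonneg _) (hnat n))
      · refine le_max_of_le_right ?_
        have := ultra_L0 ((norm_add_le_max 1 s').trans (max_le (by simp) hs')) n
        simpa using this

/-- Hensel/Newton-type lemma: in a complete ultrametric field, an element close enough
to `1` has an `n`-th root. -/
theorem exists_pow_eq_of_norm_lt {F : Type*} [NormedField F] [IsUltrametricDist F]
    [CompleteSpace F] (hnat : ∀ m : ℕ, ‖(m : F)‖ ≤ 1) {n : ℕ} (hn : (n : F) ≠ 0) {u : F}
    (hu : ‖u - 1‖ < ‖(n : F)‖ ^ 2) : ∃ y : F, y ^ n = u := by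
  set c := ‖(n : F)‖ with hc
  have hcpos : 0 < c := norm_pos_iff.mpr hn
  have hc1 : c ≤ 1 := hnat n
  set r := ‖u - 1‖ / c with hr
  have hrnn : 0 ≤ r := div_nonneg (norm_nonneg (u - 1)) hcpos.le
  have hrc : r < c := by
    rw [hr, div_lt_iff₀ hcpos]
    calc ‖u - 1‖ < c ^ 2 := hu
      _ = c * c := sq c
  have hr1 : r ≤ 1 := hrc.le.trans hc1
  set B := Metric.closedBall (0 : F) r with hB
  haveI : CompleteSpace B := (Metric.isClosed_closedBall (x := (0:F)) (ε := r)).completeSpace_coe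
  haveI : Nonempty B := ⟨⟨0, by simpa [hB] using hrnn⟩⟩
  have memB : ∀ s : F, s ∈ B ↔ ‖s‖ ≤ r := by
    intro s; simp [hB, Metric.mem_closedBall, dist_zero_right]
  have hΦmem : ∀ s : B, (u - 1 - ((1 + (s : F)) ^ n - 1 - n * (s : F))) / (n : F) ∈ B := by
    rintro ⟨s, hs⟩
    have hsr : ‖s‖ ≤ r := (memB s).mp hs
    have hs1 : ‖s‖ ≤ 1 := hsr.trans hr1
    rw [memB, norm_div, ← hc, div_le_iff₀ hcpos, hr, div_mul_cancel₀ _ hcpos.ne']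
    have h1 : ‖(1 + s) ^ n - 1 - n * s‖ ≤ ‖s‖ ^ 2 := ultra_L1 hnat hs1 n
    refine (ultra_norm_sub_le_max _ _).trans (max_le le_rfl (h1.trans ?_))
    calc ‖s‖ ^ 2 ≤ r ^ 2 := by nlinarith [norm_nonneg s]
      _ = (‖u - 1‖ / c) * (‖u - 1‖ / c) := by rw [sq, hr]
      _ ≤ ‖u - 1‖ := by
          rw [div_mul_div_comm, div_le_iff₀ (by positivity)]
          nlinarith [hu, norm_nonneg (u - 1)]
  set Φ : B → B := fun s => ⟨(u - 1 - ((1 + (s : F)) ^ n - 1 - n * (s : F))) / (n : F), hΦmem s⟩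
    with hΦ
  have hlip : ∀ x y : B, dist (Φ x) (Φ y) ≤ (r / c) * dist x y := by
    rintro ⟨s, hs⟩ ⟨s', hs'⟩
    have hsr : ‖s‖ ≤ r := (memB s).mp hs
    have hs'r : ‖s'‖ ≤ r := (memB s').mp hs'
    have key : ‖(1 + s) ^ n - (1 + s') ^ n - n * (s - s')‖ ≤ max ‖s‖ ‖s'‖ * ‖s - s'‖ :=
      ultra_L2 hnat (hsr.trans hr1) (hs'r.trans hr1) n
    have hd : dist (Φ ⟨s, hs⟩) (Φ ⟨s', hs'⟩)
        = ‖(1 + s) ^ n - (1 + s') ^ n - n * (s - s')‖ / c := by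
      rw [Subtype.dist_eq, hΦ]
      simp only [dist_eq_norm]
      rw [div_sub_div_same, ← norm_neg, ← neg_div, norm_div]
      congr 2
      ring
    rw [hd, Subtype.dist_eq, dist_eq_norm]
    rw [div_le_iff₀ hcpos]
    calc ‖(1 + s) ^ n - (1 + s') ^ n - n * (s - s')‖ ≤ max ‖s‖ ‖s'‖ * ‖s - s'‖ := key
      _ ≤ r * ‖s - s'‖ := by
          exact mul_le_mul_of_nonneg_right (max_le hsr hs'r) (norm_nonneg _)
      _ = r / c * ‖s - s'‖ * c := by field_simp
  have hcontr : ContractingWith (Real.toNNReal (r / c)) Φ := by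
    constructor
    · have : r / c < 1 := (div_lt_one hcpos).mpr hrc
      exact_mod_cast Real.toNNReal_lt_one.mpr this
    · refine LipschitzWith.of_dist_le_mul fun x y => ?_
      refine (hlip x y).trans ?_
      gcongr
      exact Real.le_coe_toNNReal _
  obtain ⟨s, hfix⟩ : ∃ s : B, Φ s = s := ⟨hcontr.fixedPoint Φ, hcontr.fixedPoint_isFixedPt⟩
  refine ⟨1 + (s : F), ?_⟩
  have hval := congrArg (fun z : B => (z : F)) hfix
  simp only [hΦ] at hval
  rw [div_eq_iff hn] at hval
  linear_combination -hval

/-- A `k`-th root of unity with `‖z - 1‖ < ‖k‖` equals `1`. -/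
theorem eq_one_of_pow_eq_one_norm_lt {F : Type*} [NormedField F] [IsUltrametricDist F]
    (hnat : ∀ m : ℕ, ‖(m : F)‖ ≤ 1) {k : ℕ} {z : F} (hz : z ^ k = 1)
    (h : ‖z - 1‖ < ‖(k : F)‖) : z = 1 := by
  by_contra hne
  have hs0 : z - 1 ≠ 0 := sub_ne_zero.mpr hne
  have hs1 : ‖z - 1‖ ≤ 1 := h.le.trans (hnat k)
  have h1 : ‖(1 + (z - 1)) ^ k - 1 - k * (z - 1)‖ ≤ ‖z - 1‖ ^ 2 := ultra_L1 hnat hs1 k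
  rw [add_sub_cancel, hz] at h1
  have h2 : ‖(k : F)‖ * ‖z - 1‖ ≤ ‖z - 1‖ ^ 2 := by
    calc ‖(k : F)‖ * ‖z - 1‖ = ‖(1:F) - 1 - k * (z - 1)‖ := by
          rw [sub_self, zero_sub, norm_neg, norm_mul]
      _ ≤ ‖z - 1‖ ^ 2 := h1
  have hpos : 0 < ‖z - 1‖ := norm_pos_iff.mpr hs0
  nlinarith [h, hpos]

/-- Any root of unity `z` with `‖z - 1‖ < ‖l‖ ^ 2` equals `1` (`l` the residue
characteristic). -/
theorem eq_one_of_rootOfUnity_norm_lt {F : Type*} [NormedField F] [IsUltrametricDist F]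
    {l : ℕ} (hl : 2 ≤ l)
    (hnat : ∀ m : ℕ, ‖(m : F)‖ ≤ 1) (hcop : ∀ k : ℕ, 0 < k → ¬ l ∣ k → ‖(k : F)‖ = 1)
    (hlpos : 0 < ‖(l : F)‖) (hl1 : ‖(l : F)‖ < 1)
    {z : F} {m : ℕ} (hm : 0 < m) (hz : z ^ m = 1) (hclose : ‖z - 1‖ < ‖(l : F)‖ ^ 2) :
    z = 1 := by
  induction m using Nat.strong_induction_on generalizing z with
  | _ m ih =>
    have hz1 : ‖z‖ ≤ 1 := by
      have : ‖z‖ = ‖1 + (z - 1)‖ := by ring_nf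
      rw [this]
      refine (IsUltrametricDist.norm_add_le_max _ _).trans (max_le (by simp) ?_)
      nlinarith [hclose, hlpos, hl1]
    by_cases hdvd : l ∣ m
    · obtain ⟨m', rfl⟩ := hdvd
      have hm' : 0 < m' := Nat.pos_of_ne_zero (fun h => by subst h; simp at hm)
      have hw : (z ^ m') ^ l = 1 := by rw [← pow_mul, mul_comm]; exact hz
      have hwclose : ‖z ^ m' - 1‖ < ‖(l : F)‖ := by
        calc ‖z ^ m' - 1‖ ≤ ‖z - 1‖ := ultra_L0 hz1 m'
          _ < ‖(l : F)‖ ^ 2 := hclose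
          _ ≤ ‖(l : F)‖ := by nlinarith
      have : z ^ m' = 1 := eq_one_of_pow_eq_one_norm_lt hnat hw hwclose
      exact ih m' (by
        have : 2 * m' ≤ l * m' := Nat.mul_le_mul_right m' hl
        omega) hm' this (by assumption)
    · refine eq_one_of_pow_eq_one_norm_lt hnat hz ?_
      rw [hcop m hm hdvd]
      nlinarith

/-- A uniformly separated set in a metric space is closed. -/
theorem isClosed_of_separated {α : Type*} [MetricSpace α] {s : Set α} {δ : ℝ} (hδ : 0 < δ)
    (h : ∀ x ∈ s, ∀ y ∈ s, x ≠ y → δ ≤ dist x y) : IsClosed s := by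
  rw [← closure_subset_iff_isClosed]
  intro y hy
  obtain ⟨b, hb, hby⟩ := Metric.mem_closure_iff.mp hy (δ / 2) (by positivity)
  have : y = b := by
    by_contra hne
    have hpos : 0 < dist y b := dist_pos.mpr hne
    obtain ⟨b', hb', hb'y⟩ := Metric.mem_closure_iff.mp hy (min (dist y b) (δ / 2))
      (lt_min hpos (by positivity))
    have hne' : b' ≠ b := by
      intro hEq; subst hEq
      exact absurd (lt_min_iff.mp hb'y).1 (lt_irrefl _)
    have h1 : δ ≤ dist b b' := h b hb b' hb' (Ne.symm hne')
    have h2 : dist b b' < δ := by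
      calc dist b b' ≤ dist b y + dist y b' := dist_triangle _ _ _
        _ < δ / 2 + δ / 2 := by
            refine add_lt_add ?_ ((lt_min_iff.mp hb'y).2)
            rwa [dist_comm]
        _ = δ := by ring
    linarith
  rwa [this]

/-! ### Infrastructure on subextensions -/

section Setup
variable {l : ℕ} [Fact l.Prime] {K : Type*} [NormedField K] [Algebra ℚ_[l] K]

theorem isometry_coeE (E : IntermediateField ℚ_[l] K) :
    Isometry (fun x : ↥E => (x : K)) :=
  Isometry.of_dist_eq fun _ _ => rfl

theorem ultraSub [IsUltrametricDist K] (E : IntermediateField ℚ_[l] K) :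
    IsUltrametricDist ↥E := by
  constructor
  intro x y z
  change dist (x : K) (z : K) ≤ max (dist (x : K) (y : K)) (dist (y : K) (z : K))
  exact IsUltrametricDist.dist_triangle_max _ _ _

/-- The normed space structure on a subextension. -/
noncomputable def normedSpaceE (hnorm : ∀ x : ℚ_[l], ‖algebraMap ℚ_[l] K x‖ = ‖x‖)
    (E : IntermediateField ℚ_[l] K) : NormedSpace ℚ_[l] ↥E := by
  refine ⟨fun c x => le_of_eq ?_⟩
  show ‖((c • x : ↥E) : K)‖ = ‖c‖ * ‖(x : K)‖
  have : ((c • x : ↥E) : K) = algebraMap ℚ_[l] K c * (x : K) := by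
    rw [Algebra.smul_def]; norm_cast
  rw [this, norm_mul, hnorm]

theorem properE (hnorm : ∀ x : ℚ_[l], ‖algebraMap ℚ_[l] K x‖ = ‖x‖)
    (E : IntermediateField ℚ_[l] K) [FiniteDimensional ℚ_[l] E] : ProperSpace ↥E := by
  haveI h1 : FiniteDimensional ℚ_[l] ↥E := inferInstance
  letI ns := normedSpaceE hnorm E
  refine @FiniteDimensional.proper ℚ_[l] _ ↥E _ ns _ ?_
  exact h1

theorem unitBall_isCompact (hnorm : ∀ x : ℚ_[l], ‖algebraMap ℚ_[l] K x‖ = ‖x‖)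
    (E : IntermediateField ℚ_[l] K) [FiniteDimensional ℚ_[l] E] :
    IsCompact ((unitBall l K E : Set Kˣ)) := by
  haveI : ProperSpace ↥E := properE hnorm E
  rw [Units.isEmbedding_val₀.isCompact_iff]
  have himage : (Units.val '' ((unitBall l K E : Set Kˣ)))
      = (fun x : ↥E => (x : K)) '' (Metric.sphere (0 : ↥E) 1) := by
    ext x
    constructor
    · rintro ⟨y, ⟨hyE, hy1⟩, rfl⟩
      exact ⟨⟨(y : K), hyE⟩, by simpa [mem_sphere_zero_iff_norm] using hy1, rfl⟩
    · rintro ⟨y, hy, rfl⟩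
      have hy1 : ‖(y : K)‖ = 1 := by simpa [mem_sphere_zero_iff_norm] using hy
      have hy0 : (y : K) ≠ 0 := by
        intro h; rw [h] at hy1; simp at hy1
      exact ⟨Units.mk0 _ hy0, ⟨y.2, hy1⟩, rfl⟩
  rw [himage]
  exact (isCompact_sphere (0 : ↥E) 1).image (isometry_coeE E).continuous

end Setup

set_option maxHeartbeats 1000000 in
/-- Let `G` be a compact Hausdorff abelian topological group, `E` a
finite subextension of `Q̄_ℓ/ℚ_ℓ`, `χ : G → O_E^×/μ_E` a continuous homomorphism
and `n ≥ 1`.  Then there are a finite subextension `E' ⊇ E` and a continuous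
homomorphism `ξ : G → O_{E'}^×/μ_{E'}` with `ξ^n` equal to the composition of `χ`
with the natural map `O_E^×/μ_E → O_{E'}^×/μ_{E'}`. -/
theorem theta_divisible_step
    {l : ℕ} [Fact l.Prime]
    (K : Type*) [NormedField K] [Algebra ℚ_[l] K] [IsAlgClosure ℚ_[l] K]
    (hnorm : ∀ x : ℚ_[l], ‖algebraMap ℚ_[l] K x‖ = ‖x‖)
    (G : Type*) [CommGroup G] [TopologicalSpace G] [IsTopologicalGroup G]
    [CompactSpace G] [T2Space G]
    (E : IntermediateField ℚ_[l] K) [FiniteDimensional ℚ_[l] E]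
    (χ : G →* ↥(unitBall l K E) ⧸ muSub l K E) (hχ : Continuous χ)
    (n : ℕ) (hn : 1 ≤ n) :
    ∃ (E' : IntermediateField ℚ_[l] K) (h : E ≤ E'),
      FiniteDimensional ℚ_[l] E' ∧
      ∃ ξ : G →* ↥(unitBall l K E') ⧸ muSub l K E',
        Continuous ξ ∧ ∀ g, ξ g ^ n = mapQ l K h (χ g) := by
  classical
  -- basic instances and facts on `K`
  haveI : CharZero K := (RingHom.charZero_iff (algebraMap ℚ_[l] K).injective).mp inferInstance
  have hnat : ∀ m : ℕ, ‖(m : K)‖ ≤ 1 := by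
    intro m
    rw [← map_natCast (algebraMap ℚ_[l] K), hnorm]
    exact_mod_cast Padic.norm_int_le_one (m : ℤ)
  haveI : IsUltrametricDist K :=
    IsUltrametricDist.isUltrametricDist_of_forall_norm_natCast_le_one hnat
  haveI : IsAlgClosed K := IsAlgClosure.isAlgClosed ℚ_[l]
  haveI : Algebra.IsAlgebraic ℚ_[l] K := IsAlgClosure.isAlgebraic
  set c := ‖(n : K)‖ with hc
  have hn0 : (n : K) ≠ 0 := Nat.cast_ne_zero.mpr (by omega)
  have hcpos : 0 < c := norm_pos_iff.mpr hn0
  -- a finite cover of `O_E^×` by multiplicative `c²`-balls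
  have hcomp : IsCompact ((unitBall l K E : Set Kˣ)) := unitBall_isCompact hnorm E
  set U : ↥(unitBall l K E) → Set Kˣ :=
    fun i => (fun z : Kˣ => (z : K)) ⁻¹' Metric.ball ((i : Kˣ) : K) (c ^ 2) with hU
  have hUopen : ∀ i, IsOpen (U i) :=
    fun i => Metric.isOpen_ball.preimage Units.isEmbedding_val₀.continuous
  have hUcover : (unitBall l K E : Set Kˣ) ⊆ ⋃ i, U i := by
    intro x hx
    refine Set.mem_iUnion.mpr ⟨⟨x, hx⟩, ?_⟩
    simp only [hU, Set.mem_preimage, Metric.mem_ball]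
    simpa using by positivity
  obtain ⟨t, ht⟩ := hcomp.elim_finite_subcover U hUopen hUcover
  -- `n`-th roots of the centers
  have hroot : ∀ i : ↥(unitBall l K E), ∃ y : K, y ^ n = ((i : Kˣ) : K) :=
    fun i => IsAlgClosed.exists_pow_nat_eq _ (by omega)
  set y : ↥(unitBall l K E) → K := fun i => (hroot i).choose with hy
  have hyspec : ∀ i, y i ^ n = ((i : Kˣ) : K) := fun i => (hroot i).choose_spec
  -- the finite extension `E'`
  obtain ⟨E', hEE', hfdE', hyE'⟩ :
      ∃ E'' : IntermediateField ℚ_[l] K, E ≤ E'' ∧ FiniteDimensional ℚ_[l] E'' ∧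
        ∀ i ∈ t, y i ∈ E'' := by
    set S : Set K := y '' (t : Set ↥(unitBall l K E)) with hS
    refine ⟨E ⊔ IntermediateField.adjoin ℚ_[l] S, le_sup_left, ?_, ?_⟩
    · haveI : FiniteDimensional ℚ_[l] (IntermediateField.adjoin ℚ_[l] S) := by
        haveI : Finite S := Set.Finite.ofFinset (t.image y) (by simp [hS])
        exact IntermediateField.finiteDimensional_adjoin
          (fun x _ => (Algebra.IsAlgebraic.isAlgebraic x).isIntegral)
      exact IntermediateField.finiteDimensional_sup E (IntermediateField.adjoin ℚ_[l] S)
    · intro i hit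
      refine le_sup_right (α := IntermediateField ℚ_[l] K) ?_
      exact IntermediateField.subset_adjoin ℚ_[l] S ⟨i, hit, rfl⟩
  haveI : FiniteDimensional ℚ_[l] E' := hfdE'
  -- analytic structure on `E'`
  haveI : IsUltrametricDist ↥E' := ultraSub E'
  haveI : ProperSpace ↥E' := properE hnorm E'
  have hnat' : ∀ m : ℕ, ‖(m : ↥E')‖ ≤ 1 := by
    intro m
    have h0 : ((m : ↥E') : K) = (m : K) := by push_cast; rfl
    show ‖((m : ↥E') : K)‖ ≤ 1
    rw [h0]; exact hnat m
  -- every element of `O_E^×` has an `n`-th root in `O_{E'}^×`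
  have key : ∀ x : Kˣ, x ∈ unitBall l K E →
      ∃ w : Kˣ, w ∈ unitBall l K E' ∧ w ^ n = x := by
    intro x hx
    obtain ⟨i, hit, hxi⟩ := Set.mem_iUnion₂.mp (ht hx)
    have hxiE : ((i : Kˣ) : K) ∈ E := i.2.1
    have hxinorm : ‖((i : Kˣ) : K)‖ = 1 := i.2.2
    have hdist : ‖(x : K) - ((i : Kˣ) : K)‖ < c ^ 2 := by
      simpa [hU, dist_eq_norm] using hxi
    have hyiE' : y i ∈ E' := hyE' i hit
    have hxE : (x : K) ∈ E := hx.1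
    have hxnorm : ‖(x : K)‖ = 1 := hx.2
    have humem : (x : K) / ((i : Kˣ) : K) ∈ E' := E'.div_mem (hEE' hxE) (hEE' hxiE)
    set u : ↥E' := ⟨(x : K) / ((i : Kˣ) : K), humem⟩ with hu
    have hune : ‖(u : K) - 1‖ < c ^ 2 := by
      have hine : ((i : Kˣ) : K) ≠ 0 := Units.ne_zero _
      have h3 : (u : K) - 1 = ((x : K) - ((i : Kˣ) : K)) / ((i : Kˣ) : K) := by
        field_simp [hu]
        rw [sub_mul, one_mul]
        show (x : K) / ((i : Kˣ) : K) * ((i : Kˣ) : K) - _ = _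
        rw [div_mul_cancel₀ _ hine]
      rw [h3, norm_div, hxinorm, div_one]
      exact hdist
    have hncast : ((n : ↥E') : K) = (n : K) := by push_cast; rfl
    have hn0' : (n : ↥E') ≠ 0 := by
      intro h
      apply hn0
      rw [← hncast, h]
      push_cast
      rfl
    obtain ⟨v, hv⟩ : ∃ v : ↥E', v ^ n = u := by
      refine exists_pow_eq_of_norm_lt hnat' hn0' ?_
      show ‖((u - 1 : ↥E') : K)‖ < ‖((n : ↥E') : K)‖ ^ 2
      have h1 : ((u - 1 : ↥E') : K) = (u : K) - 1 := by push_cast; ring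
      rw [h1, hncast, ← hc]
      exact hune
    -- assemble the root
    set w0 : K := y i * (v : K) with hw0
    have hw0pow : w0 ^ n = (x : K) := by
      have hvK : (v : K) ^ n = (u : K) := by
        have h4 := congrArg (fun z : ↥E' => (z : K)) hv
        push_cast at h4
        simpa using h4
      have hine : ((i : Kˣ) : K) ≠ 0 := Units.ne_zero _
      rw [hw0, mul_pow, hyspec i, hvK, hu]
      field_simp
    have hw0normpow : ‖w0‖ ^ n = 1 := by rw [← norm_pow, hw0pow, hxnorm]
    have hw0norm : ‖w0‖ = 1 := by
      by_contra hne
      rcases lt_or_gt_of_ne hne with hlt | hgt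
      · have := pow_lt_one₀ (norm_nonneg w0) hlt (by omega : n ≠ 0)
        rw [hw0normpow] at this
        exact lt_irrefl _ this
      · have := one_lt_pow₀ hgt (by omega : n ≠ 0)
        rw [hw0normpow] at this
        exact lt_irrefl _ this
    have hw00 : w0 ≠ 0 := by
      intro h; rw [h] at hw0norm; simp at hw0norm
    refine ⟨Units.mk0 w0 hw00, ⟨?_, hw0norm⟩, ?_⟩
    · exact E'.mul_mem hyiE' v.2
    · ext
      rw [Units.val_pow_eq_pow_val]
      exact hw0pow
  -- injectivity of the `n`-th power map on `O_{E'}^×/μ_{E'}`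
  have hinj : Function.Injective (fun q : ↥(unitBall l K E') ⧸ muSub l K E' => q ^ n) := by
    intro a b hab
    have hab' : a ^ n = b ^ n := hab
    clear hab
    induction a using QuotientGroup.induction_on with
    | _ xa =>
      induction b using QuotientGroup.induction_on with
      | _ xb =>
        rw [← QuotientGroup.mk_pow, ← QuotientGroup.mk_pow, QuotientGroup.eq] at hab'
        rw [QuotientGroup.eq]
        have h6 : (((xa ^ n)⁻¹ * xb ^ n : ↥(unitBall l K E')) : Kˣ) ∈ mu K := hab'
        obtain ⟨m, hm, hpow⟩ := h6
        show ((xa⁻¹ * xb : ↥(unitBall l K E')) : Kˣ) ∈ mu K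
        refine ⟨n * m, by positivity, ?_⟩
        have h7 : ((xa⁻¹ * xb : ↥(unitBall l K E')) : Kˣ) ^ (n * m)
            = ((((xa ^ n)⁻¹ * xb ^ n : ↥(unitBall l K E')) : Kˣ)) ^ m := by
          push_cast
          rw [mul_pow, mul_pow, inv_pow, inv_pow, ← pow_mul, ← pow_mul]
        rw [h7, hpow]
  -- existence of `n`-th roots of the image of `χ`
  have hexq : ∀ g : G, ∃ q : ↥(unitBall l K E') ⧸ muSub l K E',
      q ^ n = mapQ l K hEE' (χ g) := by
    intro g
    obtain ⟨x, hxq⟩ := QuotientGroup.mk_surjective (χ g)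
    obtain ⟨w, hwmem, hwpow⟩ := key (x : Kˣ) x.2
    refine ⟨QuotientGroup.mk ⟨w, hwmem⟩, ?_⟩
    rw [← hxq]
    show _ = (QuotientGroup.map _ _ _ _) _
    change _ = ((Subgroup.inclusion (unitBall_mono l K hEE') x : ↥(unitBall l K E')) : ↥(unitBall l K E') ⧸ muSub l K E')
    rw [← QuotientGroup.mk_pow]
    congr 1
    ext
    rw [Subgroup.coe_inclusion]
    push_cast
    exact congrArg Units.val hwpow
  choose ξ₀ hξ₀ using hexq
  have hmp : ∀ p q : (↥(unitBall l K E') ⧸ muSub l K E'), (p * q) ^ n = p ^ n * q ^ n := by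
    intro p q
    induction p using QuotientGroup.induction_on with
    | _ x =>
      induction q using QuotientGroup.induction_on with
      | _ z =>
        rw [← QuotientGroup.mk_mul, ← QuotientGroup.mk_pow, ← QuotientGroup.mk_pow,
          ← QuotientGroup.mk_pow, ← QuotientGroup.mk_mul]
        congr 1
        ext
        push_cast
        rw [mul_pow]
  have hmul : ∀ a b : G, ξ₀ (a * b) = ξ₀ a * ξ₀ b := by
    intro a b
    apply hinj
    show ξ₀ (a * b) ^ n = (ξ₀ a * ξ₀ b) ^ n
    rw [hmp, hξ₀, hξ₀, hξ₀, map_mul, map_mul]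
  -- topological structure
  haveI : CompactSpace ↥(unitBall l K E') :=
    isCompact_iff_compactSpace.mp (unitBall_isCompact hnorm E')
  -- the roots of unity form a closed subset
  have hl2 : (2 : ℕ) ≤ l := (Fact.out : l.Prime).two_le
  have hlne : ((l : K)) ≠ 0 := Nat.cast_ne_zero.mpr (by omega)
  have hlpos : 0 < ‖(l : K)‖ := norm_pos_iff.mpr hlne
  have hl1 : ‖(l : K)‖ < 1 := by
    rw [← map_natCast (algebraMap ℚ_[l] K), hnorm]
    exact Padic.norm_p_lt_one
  have hcop : ∀ k : ℕ, 0 < k → ¬ l ∣ k → ‖(k : K)‖ = 1 := by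
    intro k hk hdvd
    refine le_antisymm (hnat k) (not_lt.mp fun hlt => hdvd ?_)
    have h7 : ‖((k : ℤ) : ℚ_[l])‖ < 1 := by
      have h8 : ((( k : ℤ) : ℚ_[l]) : ℚ_[l]) = ((k : ℚ_[l])) := by push_cast; rfl
      rw [h8]
      calc ‖(k : ℚ_[l])‖ = ‖(k : K)‖ := by
            rw [← map_natCast (algebraMap ℚ_[l] K) k, hnorm]
        _ < 1 := hlt
    rw [Padic.norm_intCast_lt_one_iff] at h7
    exact_mod_cast h7
  have hM : IsClosed {x : K | (∃ m, 0 < m ∧ x ^ m = 1) ∧ ‖x‖ = 1} := by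
    refine isClosed_of_separated (δ := ‖(l : K)‖ ^ 2) (by positivity) ?_
    rintro x ⟨⟨mx, hmx, hx⟩, hx1⟩ z ⟨⟨mz, hmz, hz⟩, hz1⟩ hne
    rw [dist_eq_norm]
    by_contra hlt
    push_neg at hlt
    apply hne
    have hz0 : z ≠ 0 := by intro h; rw [h] at hz1; simp at hz1
    have hq : (x / z) ^ (mx * mz) = 1 := by
      rw [div_pow, pow_mul, hx, one_pow, pow_mul', hz, one_pow]
      exact one_div_one
    have hclose : ‖x / z - 1‖ < ‖(l : K)‖ ^ 2 := by
      have h9 : x / z - 1 = (x - z) / z := by field_simp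
      rw [h9, norm_div, hz1, div_one]
      exact hlt
    have h10 := eq_one_of_rootOfUnity_norm_lt hl2 hnat hcop hlpos hl1
      (by positivity) hq hclose
    exact div_eq_one_iff_eq hz0 |>.mp h10
  have hclosed : IsClosed ((muSub l K E' : Set ↥(unitBall l K E'))) := by
    have heq : (muSub l K E' : Set ↥(unitBall l K E'))
        = (fun z : ↥(unitBall l K E') => ((z : Kˣ) : K)) ⁻¹'
          {x : K | (∃ m, 0 < m ∧ x ^ m = 1) ∧ ‖x‖ = 1} := by
      ext z
      simp only [Set.mem_preimage, Set.mem_setOf_eq, SetLike.mem_coe]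
      constructor
      · intro hzin
        have h6 : (z : Kˣ) ∈ mu K := hzin
        obtain ⟨m, hm, hpow⟩ := h6
        refine ⟨⟨m, hm, ?_⟩, z.2.2⟩
        rw [← Units.val_pow_eq_pow_val, hpow, Units.val_one]
      · rintro ⟨⟨m, hm, hpow⟩, _⟩
        show (z : Kˣ) ∈ mu K
        refine ⟨m, hm, Units.ext ?_⟩
        rw [Units.val_pow_eq_pow_val, hpow, Units.val_one]
    rw [heq]
    exact hM.preimage (Units.isEmbedding_val₀.continuous.comp continuous_subtype_val)
  haveI : IsClosed ((muSub l K E' : Set ↥(unitBall l K E'))) := hclosed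
  -- continuity of the connecting map
  have hmapc : Continuous (mapQ l K hEE') := by
    rw [(QuotientGroup.isQuotientMap_mk (muSub l K E)).continuous_iff]
    have h11 : (mapQ l K hEE') ∘ (QuotientGroup.mk)
        = QuotientGroup.mk ∘ (Subgroup.inclusion (unitBall_mono l K hEE')) := by
      funext x
      exact QuotientGroup.map_mk _ _ _ _ _
    rw [h11]
    refine QuotientGroup.continuous_mk.comp ?_
    refine continuous_induced_rng.mpr ?_
    have h12 : (Subtype.val ∘ (Subgroup.inclusion (unitBall_mono l K hEE')))
        = fun x : ↥(unitBall l K E) => (x : Kˣ) :=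
      funext fun x => Subgroup.coe_inclusion _ x
    rw [h12]
    exact continuous_subtype_val
  have hpowc : Continuous (fun q : ↥(unitBall l K E') ⧸ muSub l K E' => q ^ n) :=
    continuous_pow n
  have hemb := hpowc.isClosedEmbedding hinj
  have hξcont : Continuous ξ₀ := by
    rw [hemb.toIsEmbedding.continuous_iff]
    have h13 : ((fun q : ↥(unitBall l K E') ⧸ muSub l K E' => q ^ n) ∘ ξ₀)
        = fun g => mapQ l K hEE' (χ g) := funext hξ₀
    rw [h13]
    exact hmapc.comp hχ
  exact ⟨E', hEE', hfdE', MonoidHom.mk' ξ₀ hmul, hξcont, hξ₀⟩
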